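/- Fix a nonzero v ∈ ℝⁿ and define f(A) = log(Av·v) on the set of symmetric positive-definite n×n matrices. Then f is 1-Lipschitz with respect to the metric dist(A,B) = ‖log(A^{-1/2} B A^{-1/2})‖_HS: for all positive-definite A, B, |log(Av·v) - log(Bv·v)| ≤ dist(A,B). -/

import Mathlib

open Matrix Real

noncomputable def matFun {n : ℕ} (f : ℝ → ℝ) (A : Matrix (Fin n) (Fin n) ℝ) :
    Matrix (Fin n) (Fin n) ℝ :=
  if hA : A.IsHermitian then
    (hA.eigenvectorUnitary : Matrix (Fin n) (Fin n) ℝ) *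
      Matrix.diagonal (fun i => f (hA.eigenvalues i)) *
      (star (hA.eigenvectorUnitary : Matrix (Fin n) (Fin n) ℝ))
  else 0

lemma matFun_def {n : ℕ} {A : Matrix (Fin n) (Fin n) ℝ} (hA : A.IsHermitian) (f : ℝ → ℝ) :
    matFun f A = (hA.eigenvectorUnitary : Matrix (Fin n) (Fin n) ℝ) *
      Matrix.diagonal (fun i => f (hA.eigenvalues i)) *
      (star (hA.eigenvectorUnitary : Matrix (Fin n) (Fin n) ℝ)) := dif_pos hA

lemma star_mul_selfU {n : ℕ} {A : Matrix (Fin n) (Fin n) ℝ} (hA : A.IsHermitian) :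
    (star (hA.eigenvectorUnitary : Matrix (Fin n) (Fin n) ℝ)) *
      (hA.eigenvectorUnitary : Matrix (Fin n) (Fin n) ℝ) = 1 :=
  Unitary.coe_star_mul_self hA.eigenvectorUnitary

lemma mul_star_selfU {n : ℕ} {A : Matrix (Fin n) (Fin n) ℝ} (hA : A.IsHermitian) :
    (hA.eigenvectorUnitary : Matrix (Fin n) (Fin n) ℝ) *
      (star (hA.eigenvectorUnitary : Matrix (Fin n) (Fin n) ℝ)) = 1 :=
  Unitary.coe_mul_star_self hA.eigenvectorUnitary

lemma matFun_mul {n : ℕ} {A : Matrix (Fin n) (Fin n) ℝ} (hA : A.IsHermitian) (f g : ℝ → ℝ) :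
    matFun f A * matFun g A = matFun (fun t => f t * g t) A := by
  rw [matFun_def hA f, matFun_def hA g, matFun_def hA]
  set U := (hA.eigenvectorUnitary : Matrix (Fin n) (Fin n) ℝ)
  have h1 : star U * U = 1 := star_mul_selfU hA
  calc U * Matrix.diagonal (fun i => f (hA.eigenvalues i)) * star U *
        (U * Matrix.diagonal (fun i => g (hA.eigenvalues i)) * star U)
      = U * (Matrix.diagonal (fun i => f (hA.eigenvalues i)) * ((star U * U) *
          Matrix.diagonal (fun i => g (hA.eigenvalues i)))) * star U := by
        simp only [Matrix.mul_assoc]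
    _ = U * Matrix.diagonal (fun i => f (hA.eigenvalues i) * g (hA.eigenvalues i)) * star U := by
        rw [h1, Matrix.one_mul, Matrix.diagonal_mul_diagonal]

lemma matFun_congr {n : ℕ} {A : Matrix (Fin n) (Fin n) ℝ} (hA : A.IsHermitian) {f g : ℝ → ℝ}
    (h : ∀ i, f (hA.eigenvalues i) = g (hA.eigenvalues i)) : matFun f A = matFun g A := by
  rw [matFun_def hA f, matFun_def hA g]
  congr 2
  exact congrArg _ (funext h)

lemma matFun_id {n : ℕ} {A : Matrix (Fin n) (Fin n) ℝ} (hA : A.IsHermitian) :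
    matFun id A = A := by
  rw [matFun_def hA]
  have := hA.spectral_theorem
  simpa using this.symm

lemma matFun_one {n : ℕ} {A : Matrix (Fin n) (Fin n) ℝ} (hA : A.IsHermitian) {f : ℝ → ℝ}
    (h : ∀ i, f (hA.eigenvalues i) = 1) : matFun f A = 1 := by
  rw [matFun_def hA]
  have : (fun i => f (hA.eigenvalues i)) = fun _ => (1:ℝ) := funext h
  rw [this, Matrix.diagonal_one, Matrix.mul_one, mul_star_selfU hA]

lemma matFun_isHermitian {n : ℕ} {A : Matrix (Fin n) (Fin n) ℝ} (hA : A.IsHermitian)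
    (f : ℝ → ℝ) : (matFun f A).IsHermitian := by
  rw [matFun_def hA]
  set U := (hA.eigenvectorUnitary : Matrix (Fin n) (Fin n) ℝ)
  have hstar : star U = Uᵀ := by simp [star]
  unfold Matrix.IsHermitian
  rw [hstar]
  rw [Matrix.conjTranspose_mul, Matrix.conjTranspose_mul, Matrix.diagonal_conjTranspose]
  have h1 : ∀ (M : Matrix (Fin n) (Fin n) ℝ), Mᴴ = Mᵀ := fun M => by
    ext i j; simp [Matrix.conjTranspose_apply]
  simp [h1, Matrix.mul_assoc, star_trivial]

lemma herm_transpose {n : ℕ} {T : Matrix (Fin n) (Fin n) ℝ} (h : T.IsHermitian) : Tᵀ = T := by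
  ext i j
  have h2 := congrFun (congrFun h.eq i) j
  simpa [Matrix.conjTranspose_apply] using h2

/-- The logarithm of a positive-definite matrix, defined spectrally. -/
noncomputable def matLog {n : ℕ} (A : Matrix (Fin n) (Fin n) ℝ) :
    Matrix (Fin n) (Fin n) ℝ := matFun Real.log A

/-- The positive square root of a positive-definite matrix, defined spectrally. -/
noncomputable def matSqrt {n : ℕ} (A : Matrix (Fin n) (Fin n) ℝ) :
    Matrix (Fin n) (Fin n) ℝ := matFun Real.sqrt A

/-- `A^{-1/2}` for a positive-definite matrix, defined spectrally. -/
noncomputable def matSqrtInv {n : ℕ} (A : Matrix (Fin n) (Fin n) ℝ) :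
    Matrix (Fin n) (Fin n) ℝ := matFun (fun t => (Real.sqrt t)⁻¹) A

/-- The Hilbert–Schmidt (Frobenius) norm of a real square matrix. -/
noncomputable def hsNorm {n : ℕ} (T : Matrix (Fin n) (Fin n) ℝ) : ℝ :=
  Real.sqrt ((Tᵀ * T).trace)

lemma sqrt_mul_sqrtInv {n : ℕ} {A : Matrix (Fin n) (Fin n) ℝ} (hA : A.PosDef) :
    matSqrt A * matSqrtInv A = 1 := by
  rw [matSqrt, matSqrtInv, matFun_mul hA.1]
  exact matFun_one hA.1 fun i => mul_inv_cancel₀ (Real.sqrt_pos.2 (hA.eigenvalues_pos i)).ne'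

lemma sqrtInv_mul_sqrt {n : ℕ} {A : Matrix (Fin n) (Fin n) ℝ} (hA : A.PosDef) :
    matSqrtInv A * matSqrt A = 1 := by
  rw [matSqrt, matSqrtInv, matFun_mul hA.1]
  exact matFun_one hA.1 fun i => inv_mul_cancel₀ (Real.sqrt_pos.2 (hA.eigenvalues_pos i)).ne'

lemma sqrt_mul_sqrt {n : ℕ} {A : Matrix (Fin n) (Fin n) ℝ} (hA : A.PosDef) :
    matSqrt A * matSqrt A = A := by
  rw [matSqrt, matFun_mul hA.1,
    matFun_congr hA.1 (g := id) fun i => Real.mul_self_sqrt (hA.eigenvalues_pos i).le,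
    matFun_id hA.1]

lemma key_rayleigh {n : ℕ} {C : Matrix (Fin n) (Fin n) ℝ} (hC : C.PosDef)
    (w : Fin n → ℝ) (hw : w ≠ 0) :
    |Real.log ((C *ᵥ w) ⬝ᵥ w) - Real.log (w ⬝ᵥ w)| ≤ hsNorm (matLog C) := by
  classical
  set U := (hC.1.eigenvectorUnitary : Matrix (Fin n) (Fin n) ℝ) with hU
  set μ := hC.1.eigenvalues with hμ
  have hstar : star U = Uᵀ := by simp [star]
  have hUU : Uᵀ * U = 1 := by rw [← hstar]; exact star_mul_selfU hC.1
  have hUU' : U * Uᵀ = 1 := by rw [← hstar]; exact mul_star_selfU hC.1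
  set c := Uᵀ *ᵥ w with hc
  have hwc : w = U *ᵥ c := by
    rw [hc, Matrix.mulVec_mulVec, hUU', Matrix.one_mulVec]
  have hc0 : c ≠ 0 := by
    intro h
    apply hw
    rw [hwc, h, Matrix.mulVec_zero]
  -- spectral decomposition of C
  have hCspec : C = U * Matrix.diagonal (fun i => μ i) * Uᵀ := by
    rw [← hstar]
    simpa using hC.1.spectral_theorem
  -- the two quadratic forms
  have hS1 : (C *ᵥ w) ⬝ᵥ w = ∑ i, μ i * (c i * c i) := by
    rw [hCspec]
    rw [← Matrix.mulVec_mulVec, ← Matrix.mulVec_mulVec, ← hc]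
    rw [dotProduct_comm, Matrix.dotProduct_mulVec, ← Matrix.mulVec_transpose, ← hc]
    simp [dotProduct, Matrix.mulVec_diagonal]
    exact Finset.sum_congr rfl fun i _ => by ring
  have hS2 : w ⬝ᵥ w = ∑ i, c i * c i := by
    conv_lhs => rw [hwc]
    rw [dotProduct_comm, Matrix.dotProduct_mulVec, ← Matrix.mulVec_transpose,
      Matrix.mulVec_mulVec, hUU, Matrix.one_mulVec]
    simp [dotProduct]
  -- the HS norm of the log
  have hlog : hsNorm (matLog C) = Real.sqrt (∑ i, Real.log (μ i) * Real.log (μ i)) := by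
    have hT : matLog C = U * Matrix.diagonal (fun i => Real.log (μ i)) * Uᵀ := by
      rw [matLog, matFun_def hC.1, hstar]
    have hTh : (matLog C)ᵀ = matLog C := by
      rw [hT]
      rw [Matrix.transpose_mul, Matrix.transpose_mul, Matrix.diagonal_transpose,
        Matrix.transpose_transpose, Matrix.mul_assoc]
    rw [hsNorm, hTh]
    have : matLog C * matLog C = matFun (fun t => Real.log t * Real.log t) C := by
      rw [matLog, matFun_mul hC.1]
    rw [this, matFun_def hC.1, hstar, ← hU]
    rw [Matrix.trace_mul_cycle, hUU, Matrix.one_mul, Matrix.trace_diagonal]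
  obtain ⟨M, hM⟩ : ∃ M, hsNorm (matLog C) = M := ⟨_, rfl⟩
  rw [hM] at hlog ⊢
  have hM0 : 0 ≤ M := by rw [hlog]; exact Real.sqrt_nonneg _
  have hbound : ∀ j, |Real.log (μ j)| ≤ M := by
    intro j
    rw [hlog, ← Real.sqrt_mul_self (abs_nonneg (Real.log (μ j)))]
    apply Real.sqrt_le_sqrt
    calc |Real.log (μ j)| * |Real.log (μ j)| = Real.log (μ j) * Real.log (μ j) := by
          rw [abs_mul_abs_self]
      _ ≤ ∑ i, Real.log (μ i) * Real.log (μ i) :=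
          Finset.single_le_sum (f := fun i => Real.log (μ i) * Real.log (μ i))
            (fun i _ => mul_self_nonneg _) (Finset.mem_univ j)
  -- positivity
  have hc2pos : 0 < ∑ i, c i * c i := by
    obtain ⟨j, hj⟩ := Function.ne_iff.1 hc0
    exact Finset.sum_pos' (fun i _ => mul_self_nonneg _)
      ⟨j, Finset.mem_univ j, mul_self_pos.2 hj⟩
  have hμpos : ∀ i, 0 < μ i := hC.eigenvalues_pos
  have hub : ∑ i, μ i * (c i * c i) ≤ Real.exp M * ∑ i, c i * c i := by
    rw [Finset.mul_sum]
    apply Finset.sum_le_sum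
    intro i _
    apply mul_le_mul_of_nonneg_right _ (mul_self_nonneg _)
    calc μ i = Real.exp (Real.log (μ i)) := (Real.exp_log (hμpos i)).symm
      _ ≤ Real.exp M := Real.exp_le_exp.2 ((le_abs_self _).trans (hbound i))
  have hlb : Real.exp (-M) * ∑ i, c i * c i ≤ ∑ i, μ i * (c i * c i) := by
    rw [Finset.mul_sum]
    apply Finset.sum_le_sum
    intro i _
    apply mul_le_mul_of_nonneg_right _ (mul_self_nonneg _)
    calc Real.exp (-M) ≤ Real.exp (Real.log (μ i)) := by
          apply Real.exp_le_exp.2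
          have := (abs_le.1 (hbound i)).1
          linarith
      _ = μ i := Real.exp_log (hμpos i)
  have hS1pos : 0 < ∑ i, μ i * (c i * c i) :=
    lt_of_lt_of_le (mul_pos (Real.exp_pos _) hc2pos) hlb
  rw [hS1, hS2, abs_sub_le_iff]
  constructor
  · have := Real.log_le_log hS1pos hub
    rwa [Real.log_mul (Real.exp_pos M).ne' hc2pos.ne', Real.log_exp, ← sub_le_iff_le_add] at this
  · have := Real.log_le_log hc2pos (by
      have h2 : ∑ i, c i * c i ≤ Real.exp M * ∑ i, μ i * (c i * c i) := by
        have := mul_le_mul_of_nonneg_left hlb (Real.exp_pos M).le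
        rwa [← mul_assoc, ← Real.exp_add, add_neg_cancel, Real.exp_zero, one_mul] at this
      exact h2)
    rwa [Real.log_mul (Real.exp_pos M).ne' hS1pos.ne', Real.log_exp, ← sub_le_iff_le_add] at this

/-- `dist(A,B) = ‖log (A^{-1/2} B A^{-1/2})‖_HS`. -/
noncomputable def pdist {n : ℕ} (A B : Matrix (Fin n) (Fin n) ℝ) : ℝ :=
  hsNorm (matLog (matSqrtInv A * B * matSqrtInv A))

theorem stmt11 {n : ℕ} (v : Fin n → ℝ) (hv : v ≠ 0)
    (A B : Matrix (Fin n) (Fin n) ℝ) (hA : A.PosDef) (hB : B.PosDef) :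
    |Real.log ((A *ᵥ v) ⬝ᵥ v) - Real.log ((B *ᵥ v) ⬝ᵥ v)| ≤ pdist A B := by
  classical
  set S := matSqrt A with hSdef
  set R := matSqrtInv A with hRdef
  have hSR : S * R = 1 := sqrt_mul_sqrtInv hA
  have hRS : R * S = 1 := sqrtInv_mul_sqrt hA
  have hSS : S * S = A := sqrt_mul_sqrt hA
  have hSt : Sᵀ = S := herm_transpose (matFun_isHermitian hA.1 Real.sqrt)
  have hRt : Rᵀ = R := herm_transpose (matFun_isHermitian hA.1 (fun t => (Real.sqrt t)⁻¹))
  set w := S *ᵥ v with hwdef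
  have hw : w ≠ 0 := by
    intro h
    apply hv
    have : R *ᵥ (S *ᵥ v) = v := by
      rw [Matrix.mulVec_mulVec, hRS, Matrix.one_mulVec]
    rw [← this, ← hwdef, h, Matrix.mulVec_zero]
  set C := R * B * R with hCdef
  have hC : C.PosDef := by
    refine Matrix.PosDef.of_dotProduct_mulVec_pos ?_ ?_
    · show Cᴴ = C
      rw [hCdef]
      have hBh : Bᴴ = B := hB.1
      have hRh : Rᴴ = R := by
        ext i j
        simp only [Matrix.conjTranspose_apply, star_trivial]
        exact congrFun (congrFun hRt i) j
      rw [Matrix.conjTranspose_mul, Matrix.conjTranspose_mul, hBh, hRh, Matrix.mul_assoc]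
    · intro x hx
      have hRx : R *ᵥ x ≠ 0 := by
        intro h
        apply hx
        have : S *ᵥ (R *ᵥ x) = x := by
          rw [Matrix.mulVec_mulVec, hSR, Matrix.one_mulVec]
        rw [← this, h, Matrix.mulVec_zero]
      have key := hB.dotProduct_mulVec_pos hRx
      have : star x ⬝ᵥ (C *ᵥ x) = star (R *ᵥ x) ⬝ᵥ (B *ᵥ (R *ᵥ x)) := by
        simp only [star_trivial]
        rw [hCdef, ← Matrix.mulVec_mulVec, ← Matrix.mulVec_mulVec]
        rw [Matrix.dotProduct_mulVec x R, ← Matrix.mulVec_transpose, hRt]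
      rw [this]
      exact key
  have hAv : (A *ᵥ v) ⬝ᵥ v = w ⬝ᵥ w := by
    rw [← hSS, ← Matrix.mulVec_mulVec, ← hwdef]
    rw [dotProduct_comm, Matrix.dotProduct_mulVec, ← Matrix.mulVec_transpose, hSt, ← hwdef]
  have hBv : (C *ᵥ w) ⬝ᵥ w = (B *ᵥ v) ⬝ᵥ v := by
    have h1 : C *ᵥ w = R *ᵥ (B *ᵥ v) := by
      rw [hwdef, hCdef, Matrix.mulVec_mulVec, Matrix.mulVec_mulVec,
        Matrix.mul_assoc (R * B) R S, hRS, Matrix.mul_one]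
    rw [h1, hwdef]
    rw [dotProduct_comm, Matrix.dotProduct_mulVec (S *ᵥ v) R, ← Matrix.mulVec_transpose,
      hRt, Matrix.mulVec_mulVec, hRS, Matrix.one_mulVec]
    exact dotProduct_comm _ _
  have hkey := key_rayleigh hC w hw
  rw [hBv, ← hAv] at hkey
  rw [abs_sub_comm] at hkey
  exact hkey
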